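/- Let ρ ≤ λ be infinite cardinals. Then m(ρ, λ⁺) = max{λ⁺, m(ρ, λ)}. -/

import Mathlib

open Cardinal

noncomputable section

/-- The covering number `cov(ρ₁, ρ₂, ρ₃, ρ₄)`: least cardinality of `X ⊆ P_{ρ₂}(ρ₁)`
such that every `b ∈ P_{ρ₃}(ρ₁)` is covered by the union of fewer than `ρ₄` members of `X`. -/
def cov (r1 r2 r3 r4 : Cardinal) : Cardinal :=
  sInf { c | ∃ X : Set (Set r1.out),
    (∀ x ∈ X, #x < r2) ∧
    (∀ b : Set r1.out, #b < r3 → ∃ Q : Set (Set r1.out), Q ⊆ X ∧ #Q < r4 ∧ b ⊆ ⋃₀ Q) ∧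
    #X = c }

/-- The meeting number `m(ρ, λ)`. -/
def meet (ρ lam : Cardinal) : Cardinal :=
  sInf { c | ∃ Q : Set (Set lam.out),
    (∀ q ∈ Q, #q = ρ) ∧
    (∀ b : Set lam.out, #b = ρ → ∃ q ∈ Q, #(↥(b ∩ q)) = ρ) ∧
    #Q = c }

/-- The density number `d(ρ, λ)`. -/
def dens (ρ lam : Cardinal) : Cardinal :=
  sInf { c | ∃ Q : Set (Set lam.out),
    (∀ q ∈ Q, #q = ρ) ∧
    (∀ b : Set lam.out, #b = ρ → ∃ q ∈ Q, q ⊆ b) ∧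
    #Q = c }

/-- `ds(f)` for `f : λ → ρ`. -/
def ds (ρ lam : Cardinal) (f : lam.out → ρ.out) : Cardinal :=
  sInf { c | ∃ Z : Set (Set lam.out),
    (∀ z ∈ Z, #z = ρ) ∧
    (∀ B : Set lam.out, (∀ α : ρ.out, #(↥(B ∩ f ⁻¹' {α})) = lam) →
      ∃ z ∈ Z, #(↥(f '' (z ∩ B))) = ρ) ∧
    #Z = c }

/-- The Džamonja–Shelah number `DS(ρ, λ) = sup { ds(f) : f : λ → ρ }`. -/
def DS (ρ lam : Cardinal) : Cardinal := ⨆ f : lam.out → ρ.out, ds ρ lam f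

/-- Cofinality of a cardinal. -/
def cf (c : Cardinal) : Cardinal := c.ord.cof

/-- `u(σ, λ) = cov(λ, σ, σ, ω)`. -/
def u (σ lam : Cardinal) : Cardinal := cov lam σ σ ℵ₀

/-- The `o`-th iterated cardinal successor of `c`. -/
def succIter (c : Cardinal) (o : Ordinal) : Cardinal :=
  Cardinal.preAleph (Cardinal.preAleph.symm c + o)


universe u

/-- Auxiliary: the defining set of `meet`. -/
def famSet (ρ : Cardinal.{u}) (α : Type u) : Set Cardinal.{u} :=
  { c | ∃ Q : Set (Set α),
    (∀ q ∈ Q, #q = ρ) ∧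
    (∀ b : Set α, #b = ρ → ∃ q ∈ Q, #(↥(b ∩ q)) = ρ) ∧
    #Q = c }

lemma meet_eq_sInf (ρ lam : Cardinal) : meet ρ lam = sInf (famSet ρ lam.out) := rfl

lemma famSet_nonempty (ρ : Cardinal.{u}) (α : Type u) : (famSet ρ α).Nonempty := by
  refine ⟨#({q : Set α | #q = ρ}), {q : Set α | #q = ρ}, fun q hq => hq, ?_, rfl⟩
  intro b hb
  exact ⟨b, hb, by rwa [Set.inter_self]⟩

lemma image_preimage_inter {α β : Type u} {f : α → β} (hf : Function.Injective f)
    {b : Set β} (hb : b ⊆ Set.range f) (q : Set α) :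
    f '' (f ⁻¹' b ∩ q) = b ∩ f '' q := by
  rw [Set.image_inter hf, Set.image_preimage_eq_inter_range,
    Set.inter_eq_self_of_subset_left hb]

theorem stmt5 (ρ lam : Cardinal) (hρ : ℵ₀ ≤ ρ) (hle : ρ ≤ lam) :
    meet ρ (Order.succ lam) = max (Order.succ lam) (meet ρ lam) := by
  have hlaminf : ℵ₀ ≤ lam := hρ.trans hle
  set κ := Order.succ lam with hκdef
  have hlamκ : lam < κ := Order.lt_succ lam
  have hκinf : ℵ₀ ≤ κ := hlaminf.trans hlamκ.le
  have hρ0 : ρ ≠ 0 := by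
    intro h; rw [h] at hρ; exact (Cardinal.aleph0_pos.not_ge hρ).elim
  have hreg : (κ.ord.cof) = κ := (Cardinal.isRegular_succ hlaminf).cof_eq
  rw [meet_eq_sInf, meet_eq_sInf]
  apply le_antisymm
  · -- upper bound: exhibit a family on κ.out of size ≤ max κ (meet ρ lam)
    obtain ⟨Q₀, h1₀, h2₀, hc₀⟩ := csInf_mem (famSet_nonempty ρ lam.out)
    rw [← meet_eq_sInf] at hc₀
    -- work on the well-ordered type W
    have hWcard : #(κ.ord.ToType) = κ := by rw [Cardinal.mk_toType, Cardinal.card_ord]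
    obtain ⟨e⟩ : Nonempty (κ.out ≃ κ.ord.ToType) := Cardinal.eq.1 (by rw [Cardinal.mk_out, hWcard])
    obtain ⟨t₀, ht₀⟩ : ∃ t₀ : Set κ.ord.ToType, #t₀ = lam :=
      Cardinal.le_mk_iff_exists_set.1 (by rw [hWcard]; exact hlamκ.le)
    set A : κ.ord.ToType → Set κ.ord.ToType := fun x => Set.Iio x ∪ t₀ with hAdef
    have hA : ∀ x, #(A x) = lam := by
      intro x
      apply le_antisymm
      · refine (Cardinal.mk_union_le _ _).trans ?_
        have h1 : #(Set.Iio x) ≤ lam := by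
          have := Cardinal.mk_Iio_ord_toType x
          exact Order.lt_succ_iff.1 this
        calc #(Set.Iio x) + #t₀ ≤ lam + lam := add_le_add h1 ht₀.le
          _ = lam := Cardinal.add_eq_self hlaminf
      · rw [← ht₀]; exact Cardinal.mk_le_mk_of_subset Set.subset_union_right
    have hg : ∀ x : κ.ord.ToType, Nonempty (lam.out ≃ ↥(A x)) := fun x =>
      Cardinal.eq.1 (by rw [Cardinal.mk_out, hA])
    set g : ∀ x : κ.ord.ToType, lam.out ≃ ↥(A x) := fun x => (hg x).some with hgdef
    set f : κ.ord.ToType → lam.out → κ.ord.ToType := fun x z => ((g x) z : κ.ord.ToType) with hfdef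
    have hfinj : ∀ x, Function.Injective (f x) := fun x =>
      Subtype.val_injective.comp (g x).injective
    have hfrange : ∀ x, Set.range (f x) = A x := by
      intro x
      have : Set.range (f x) = Subtype.val '' Set.range (g x) := by
        rw [← Set.range_comp]; rfl
      rw [this, Equiv.range_eq_univ, Set.image_univ, Subtype.range_coe]
    set QW : Set (Set κ.ord.ToType) := Set.range (fun p : κ.ord.ToType × ↥Q₀ => f p.1 '' (p.2 : Set lam.out))
      with hQW
    set QT : Set (Set κ.out) := (fun s => e ⁻¹' s) '' QW with hQT
    have hmem : #QT ∈ famSet ρ κ.out := by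
      refine ⟨QT, ?_, ?_, rfl⟩
      · rintro q ⟨s, ⟨⟨x, q₀⟩, rfl⟩, rfl⟩
        simp only []
        rw [← Equiv.image_symm_eq_preimage,
          Cardinal.mk_image_eq e.symm.injective,
          Cardinal.mk_image_eq (hfinj x)]
        exact h1₀ _ q₀.2
      · intro b hb
        set b' : Set κ.ord.ToType := e '' b with hb'
        have hb'card : #b' = ρ := by rw [hb', Cardinal.mk_image_eq e.injective, hb]
        have hbdd : Set.Bounded (· < ·) b' := by
          have hnc : ¬ IsCofinal b' := by
            intro hc
            have := Order.cof_le hc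
            rw [Ordinal.cof_toType, hreg, hb'card] at this
            exact (not_le_of_gt (hle.trans_lt hlamκ)) this
          exact not_isCofinal_iff.1 hnc
        obtain ⟨x, hx⟩ := hbdd
        have hbsub : b' ⊆ Set.range (f x) := by
          rw [hfrange]
          exact fun y hy => Set.mem_union_left _ (hx y hy)
        set B : Set lam.out := f x ⁻¹' b' with hB
        have hBcard : #B = ρ := by
          rw [hB, Cardinal.mk_preimage_of_injective_of_subset_range _ _ (hfinj x) hbsub,
            hb'card]
        obtain ⟨q₀, hq₀Q, hq₀⟩ := h2₀ B hBcard
        refine ⟨e ⁻¹' (f x '' q₀), ⟨f x '' q₀, ⟨⟨x, ⟨q₀, hq₀Q⟩⟩, rfl⟩, rfl⟩, ?_⟩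
        have key : #(↥(b' ∩ f x '' q₀)) = ρ := by
          rw [← image_preimage_inter (hfinj x) hbsub q₀,
            Cardinal.mk_image_eq (hfinj x), ← hB]
          exact hq₀
        have : b ∩ e ⁻¹' (f x '' q₀) = e ⁻¹' (b' ∩ f x '' q₀) := by
          rw [Set.preimage_inter, hb', Set.preimage_image_eq b e.injective]
        rw [this, Cardinal.mk_preimage_of_injective_of_subset_range _ _ e.injective
          (by rw [Equiv.range_eq_univ]; exact Set.subset_univ _)]
        exact key
    refine (csInf_le (OrderBot.bddBelow _) hmem).trans ?_
    have h1 : #QT ≤ #QW := Cardinal.mk_image_le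
    have h2 : #QW ≤ #(κ.ord.ToType × ↥Q₀) := Cardinal.mk_range_le
    have h3 : #(κ.ord.ToType × ↥Q₀) = κ * meet ρ lam := by
      rw [Cardinal.mk_prod, Cardinal.lift_id, Cardinal.lift_id, hWcard, hc₀]
    have h4 : κ * meet ρ lam ≤ max κ (meet ρ lam) := by
      refine (Cardinal.mul_le_max _ _).trans ?_
      exact max_le le_rfl (hκinf.trans (le_max_left _ _))
    exact ((h1.trans h2).trans_eq h3).trans h4
  · apply max_le
    · -- κ ≤ meet ρ κ
      apply le_csInf (famSet_nonempty ρ κ.out)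
      rintro c ⟨Q, h1, h2, rfl⟩
      by_contra hlt
      push_neg at hlt
      have hQle : #Q ≤ lam := Order.lt_succ_iff.1 hlt
      have hsU : #(↥(⋃₀ Q)) ≤ lam := by
        refine (Cardinal.mk_sUnion_le Q).trans ?_
        have : ⨆ s : Q, #(s : Set κ.out) ≤ ρ := by
          apply ciSup_le'
          intro s; exact (h1 s s.2).le
        calc #Q * ⨆ s : Q, #(s : Set κ.out) ≤ lam * lam :=
              mul_le_mul' hQle (this.trans hle)
          _ = lam := Cardinal.mul_eq_self hlaminf
      have hcompl : ρ ≤ #(↥(⋃₀ Q)ᶜ) := by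
        by_contra hc
        push_neg at hc
        have : #(κ.out) < κ := by
          rw [← Cardinal.mk_sum_compl (⋃₀ Q)]
          exact Cardinal.add_lt_of_lt hκinf (hsU.trans_lt hlamκ)
            (hc.trans_le hle |>.trans hlamκ)
        rw [Cardinal.mk_out] at this
        exact this.false
      obtain ⟨t, htc⟩ := Cardinal.le_mk_iff_exists_set.1 hcompl
      set b : Set κ.out := Subtype.val '' t with hbdef
      have hbc : #b = ρ := by rw [hbdef, Cardinal.mk_image_eq Subtype.val_injective, htc]
      have hbsub : b ⊆ (⋃₀ Q)ᶜ := by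
        rintro y ⟨z, _, rfl⟩; exact z.2
      obtain ⟨q, hqQ, hq⟩ := h2 b hbc
      have : b ∩ q = ∅ := by
        apply Set.eq_empty_of_subset_empty
        intro y hy
        exact (hbsub hy.1) (Set.subset_sUnion_of_mem hqQ hy.2)
      rw [this] at hq
      simp only [Cardinal.mk_emptyCollection] at hq
      exact hρ0 hq.symm
    · -- meet ρ lam ≤ meet ρ κ
      obtain ⟨Q, h1, h2, hc⟩ := csInf_mem (famSet_nonempty ρ κ.out)
      obtain ⟨i⟩ : Nonempty (lam.out ↪ κ.out) := by
        rw [← Cardinal.le_def, Cardinal.mk_out, Cardinal.mk_out]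
        exact hlamκ.le
      set S : Set (Set κ.out) := {q ∈ Q | #(↥(⇑i ⁻¹' q)) = ρ} with hS
      set Q' : Set (Set lam.out) := (fun q => ⇑i ⁻¹' q) '' S with hQ'
      have hmem : #Q' ∈ famSet ρ lam.out := by
        refine ⟨Q', ?_, ?_, rfl⟩
        · rintro q' ⟨q, hq, rfl⟩; exact hq.2
        · intro b hb
          have hib : #(↥(⇑i '' b)) = ρ := by rw [Cardinal.mk_image_eq i.injective, hb]
          obtain ⟨q, hqQ, hq⟩ := h2 _ hib
          have hsub : ⇑i '' b ∩ q ⊆ Set.range ⇑i :=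
            (Set.inter_subset_left).trans (Set.image_subset_range _ _)
          have hinter : b ∩ ⇑i ⁻¹' q = ⇑i ⁻¹' (⇑i '' b ∩ q) := by
            rw [Set.preimage_inter, Set.preimage_image_eq b i.injective]
          have hintc : #(↥(b ∩ ⇑i ⁻¹' q)) = ρ := by
            rw [hinter, Cardinal.mk_preimage_of_injective_of_subset_range _ _
              i.injective hsub]
            exact hq
          have hqpre : #(↥(⇑i ⁻¹' q)) = ρ := by
            apply le_antisymm
            · rw [← h1 q hqQ]
              exact Cardinal.mk_preimage_of_injective _ _ i.injective
            · rw [← hintc]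
              exact Cardinal.mk_le_mk_of_subset Set.inter_subset_right
          exact ⟨⇑i ⁻¹' q, ⟨q, ⟨hqQ, hqpre⟩, rfl⟩, hintc⟩
      refine (csInf_le (OrderBot.bddBelow _) hmem).trans ?_
      calc #Q' ≤ #S := Cardinal.mk_image_le
        _ ≤ #Q := Cardinal.mk_le_mk_of_subset (Set.sep_subset _ _)
        _ = _ := hc
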